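/- Let G₁ ⊆ S^n be an affine subspace (a polyhedron) and G₂ a closed convex set with G₁ ∩ G₂ ≠ ∅. If there exists a point Ỹ ∈ G₁ ∩ ri(G₂) (relative interior), then for every bounded set B there is κ > 0 such that dist(Y, G₁ ∩ G₂) ≤ κ max{dist(Y, G₁), dist(Y, G₂)} for all Y ∈ B. -/

import Mathlib

open Metric Set

section Aux

variable {E : Type*} [NormedAddCommGroup E] [InnerProductSpace ℝ E] [FiniteDimensional ℝ E]

private lemma aux_infDist_sub (V : Submodule ℝ E) {w : E} (hw : w ∈ V) (x : E) :
    Metric.infDist (x - w) (V : Set E) = Metric.infDist x (V : Set E) := by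
  have him : (fun z : E => z + w) '' (V : Set E) = (V : Set E) := by
    ext z
    constructor
    · rintro ⟨y, hy, rfl⟩; exact V.add_mem hy hw
    · intro hz; exact ⟨z - w, V.sub_mem hz hw, by simp⟩
  have hiso : Isometry (fun z : E => z + w) :=
    Isometry.of_dist_eq fun a b => dist_add_right a b w
  have h := Metric.infDist_image (x := x - w) (t := (V : Set E)) hiso
  rw [him] at h
  simpa using h.symm

private lemma aux_infDist_smul_le (V : Submodule ℝ E) {a : ℝ} (ha : 0 ≤ a) (u : E) :
    Metric.infDist (a • u) (V : Set E) ≤ a * Metric.infDist u (V : Set E) := by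
  obtain ⟨v, hv, hdv⟩ :=
    V.closed_of_finiteDimensional.exists_infDist_eq_dist ⟨0, V.zero_mem⟩ u
  calc Metric.infDist (a • u) (V : Set E) ≤ dist (a • u) (a • v) :=
        Metric.infDist_le_dist_of_mem (V.smul_mem a hv)
    _ = a * dist u v := by rw [dist_smul₀]; simp [abs_of_nonneg ha]
    _ = a * Metric.infDist u (V : Set E) := by rw [hdv]

private lemma aux_linreg (V W : Submodule ℝ E) :
    ∃ c > (0:ℝ), ∀ x : E, Metric.infDist x ((V ⊓ W : Submodule ℝ E) : Set E)
      ≤ c * (Metric.infDist x (V : Set E) + Metric.infDist x (W : Set E)) := by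
  set U := (V ⊓ W)ᗮ with hUdef
  by_cases hU : U = ⊥
  · refine ⟨1, one_pos, fun x => ?_⟩
    have hT : V ⊓ W = ⊤ := Submodule.orthogonal_eq_bot_iff.mp hU
    have hx : x ∈ ((V ⊓ W : Submodule ℝ E) : Set E) := by rw [hT]; trivial
    rw [Metric.infDist_zero_of_mem hx]
    have := Metric.infDist_nonneg (x := x) (s := (V : Set E))
    have := Metric.infDist_nonneg (x := x) (s := (W : Set E))
    linarith
  · -- nonempty compact set K
    have hKcpt : IsCompact (Metric.sphere (0:E) 1 ∩ (U : Set E)) :=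
      (isCompact_sphere 0 1).inter_right U.closed_of_finiteDimensional
    have hKne : (Metric.sphere (0:E) 1 ∩ (U : Set E)).Nonempty := by
      obtain ⟨u, huU, hu0⟩ := Submodule.exists_mem_ne_zero_of_ne_bot hU
      refine ⟨‖u‖⁻¹ • u, ?_, U.smul_mem _ huU⟩
      have : ‖u‖ ≠ 0 := norm_ne_zero_iff.mpr hu0
      simp [norm_smul, abs_of_nonneg (norm_nonneg u), inv_mul_cancel₀ this]
    have hfc : ContinuousOn (fun u : E => Metric.infDist u (V : Set E)
        + Metric.infDist u (W : Set E)) (Metric.sphere (0:E) 1 ∩ (U : Set E)) :=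
      ((Metric.continuous_infDist_pt _).add (Metric.continuous_infDist_pt _)).continuousOn
    obtain ⟨x₀, hx₀K, hx₀min⟩ := hKcpt.exists_isMinOn hKne hfc
    set m := Metric.infDist x₀ (V : Set E) + Metric.infDist x₀ (W : Set E) with hm
    have hm0 : 0 < m := by
      rcases lt_or_ge 0 m with h | h
      · exact h
      · exfalso
        have h1 : Metric.infDist x₀ (V : Set E) = 0 := le_antisymm (by
            have := Metric.infDist_nonneg (x := x₀) (s := (W : Set E)); linarith)
          Metric.infDist_nonneg
        have h2 : Metric.infDist x₀ (W : Set E) = 0 := le_antisymm (by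
            have := Metric.infDist_nonneg (x := x₀) (s := (V : Set E)); linarith)
          Metric.infDist_nonneg
        have hxV : x₀ ∈ V :=
          (V.closed_of_finiteDimensional.mem_iff_infDist_zero ⟨0, V.zero_mem⟩).mpr h1
        have hxW : x₀ ∈ W :=
          (W.closed_of_finiteDimensional.mem_iff_infDist_zero ⟨0, W.zero_mem⟩).mpr h2
        have hxU : x₀ ∈ U := hx₀K.2
        have : x₀ = 0 := by
          have h0 := (Submodule.mem_orthogonal _ x₀).mp hxU x₀
            (Submodule.mem_inf.mpr ⟨hxV, hxW⟩)
          exact inner_self_eq_zero.mp h0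
        rw [this] at hx₀K
        simpa using hx₀K.1
    refine ⟨m⁻¹, inv_pos.mpr hm0, fun x => ?_⟩
    set w := (((V ⊓ W).orthogonalProjectionOnto x : E)) with hwdef
    have hw : w ∈ V ⊓ W := SetLike.coe_mem _
    have hu : x - w ∈ U := Submodule.sub_starProjection_mem_orthogonal (K := V ⊓ W) x
    have h1 : Metric.infDist x ((V ⊓ W : Submodule ℝ E) : Set E) ≤ ‖x - w‖ := by
      have := Metric.infDist_le_dist_of_mem (x := x) hw
      simpa [dist_eq_norm] using this
    have hRHS0 : 0 ≤ Metric.infDist x (V : Set E) + Metric.infDist x (W : Set E) := by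
      have := Metric.infDist_nonneg (x := x) (s := (V : Set E))
      have := Metric.infDist_nonneg (x := x) (s := (W : Set E))
      linarith
    rcases eq_or_ne (x - w) 0 with h0 | h0
    · rw [h0, norm_zero] at h1
      exact h1.trans (by positivity)
    · set u := x - w with hudef
      have hun : 0 < ‖u‖ := norm_pos_iff.mpr h0
      have huK : ‖u‖⁻¹ • u ∈ Metric.sphere (0:E) 1 ∩ (U : Set E) := by
        refine ⟨?_, U.smul_mem _ hu⟩
        simp [norm_smul, abs_of_nonneg (norm_nonneg u), inv_mul_cancel₀ hun.ne']
      have hmin := hx₀min huK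
      have hV : Metric.infDist (‖u‖⁻¹ • u) (V : Set E)
          ≤ ‖u‖⁻¹ * Metric.infDist u (V : Set E) :=
        aux_infDist_smul_le V (by positivity) u
      have hW : Metric.infDist (‖u‖⁻¹ • u) (W : Set E)
          ≤ ‖u‖⁻¹ * Metric.infDist u (W : Set E) :=
        aux_infDist_smul_le W (by positivity) u
      have htV : Metric.infDist u (V : Set E) = Metric.infDist x (V : Set E) :=
        aux_infDist_sub V hw.1 x
      have htW : Metric.infDist u (W : Set E) = Metric.infDist x (W : Set E) :=
        aux_infDist_sub W hw.2 x
      have hchain : m ≤ ‖u‖⁻¹ * (Metric.infDist x (V : Set E)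
          + Metric.infDist x (W : Set E)) := by
        have := hmin
        simp only at this
        calc m ≤ Metric.infDist (‖u‖⁻¹ • u) (V : Set E)
              + Metric.infDist (‖u‖⁻¹ • u) (W : Set E) := this
          _ ≤ ‖u‖⁻¹ * Metric.infDist u (V : Set E)
              + ‖u‖⁻¹ * Metric.infDist u (W : Set E) := add_le_add hV hW
          _ = ‖u‖⁻¹ * (Metric.infDist x (V : Set E)
              + Metric.infDist x (W : Set E)) := by rw [htV, htW]; ring
      have hub : ‖u‖ ≤ m⁻¹ * (Metric.infDist x (V : Set E)
          + Metric.infDist x (W : Set E)) := by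
        rw [← mul_le_mul_iff_right₀ hm0, ← mul_assoc, mul_inv_cancel₀ hm0.ne', one_mul]
        calc m * ‖u‖ ≤ (‖u‖⁻¹ * (Metric.infDist x (V : Set E)
              + Metric.infDist x (W : Set E))) * ‖u‖ := by
              exact mul_le_mul_of_nonneg_right hchain (norm_nonneg u)
          _ = Metric.infDist x (V : Set E) + Metric.infDist x (W : Set E) := by
              field_simp
      exact h1.trans hub

private lemma aux_affreg (A B : AffineSubspace ℝ E) {p : E} (hpA : p ∈ A) (hpB : p ∈ B) :
    ∃ c > (0:ℝ), ∀ x : E, Metric.infDist x ((A ⊓ B : AffineSubspace ℝ E) : Set E)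
      ≤ c * (Metric.infDist x (A : Set E) + Metric.infDist x (B : Set E)) := by
  obtain ⟨c, hc, hreg⟩ := aux_linreg A.direction B.direction
  refine ⟨c, hc, fun x => ?_⟩
  have hAB : p ∈ A ⊓ B := ⟨hpA, hpB⟩
  have key : ∀ (S : AffineSubspace ℝ E), p ∈ S →
      Metric.infDist x (S : Set E) = Metric.infDist (x - p) (S.direction : Set E) := by
    intro S hS
    have him : (fun z : E => z - p) '' (S : Set E) = (S.direction : Set E) := by
      rw [AffineSubspace.coe_direction_eq_vsub_set_right hS]
      simp [vsub_eq_sub]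
    have hiso : Isometry (fun z : E => z - p) :=
      Isometry.of_dist_eq fun a b => dist_sub_right a b p
    have h := Metric.infDist_image (x := x) (t := (S : Set E)) hiso
    rw [him] at h
    exact h.symm
  rw [key _ hAB, key A hpA, key B hpB, AffineSubspace.direction_inf_of_mem hpA hpB]
  exact hreg (x - p)

end Aux

/-- bounded linear regularity criterion: if `G₁` is an affine subspace and `G₂`
a closed convex set with a point `Ỹ ∈ G₁ ∩ ri(G₂)`, then for every bounded set `B` there is
`κ > 0` with `dist(Y, G₁ ∩ G₂) ≤ κ max{dist(Y,G₁), dist(Y,G₂)}` for all `Y ∈ B`. -/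
theorem stmt15 {E : Type*} [NormedAddCommGroup E] [InnerProductSpace ℝ E]
    [FiniteDimensional ℝ E]
    (G1 : AffineSubspace ℝ E) (G2 : Set E)
    (hG2conv : Convex ℝ G2) (hG2closed : IsClosed G2)
    (Ytil : E) (hYtil : Ytil ∈ (G1 : Set E) ∩ intrinsicInterior ℝ G2)
    (B : Set E) (hB : Bornology.IsBounded B) :
    ∃ κ > (0:ℝ), ∀ Y ∈ B,
      Metric.infDist Y ((G1 : Set E) ∩ G2)
        ≤ κ * max (Metric.infDist Y (G1 : Set E)) (Metric.infDist Y G2) := by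
  obtain ⟨hY1, hYri⟩ := hYtil
  set L := affineSpan ℝ G2 with hLdef
  have hYG2 : Ytil ∈ G2 := intrinsicInterior_subset hYri
  have hYL : Ytil ∈ L := subset_affineSpan ℝ G2 hYG2
  have hG2ne : G2.Nonempty := ⟨Ytil, hYG2⟩
  -- extract ε-ball inside G2 relative to L
  obtain ⟨y, hy, hyc⟩ := mem_intrinsicInterior.mp hYri
  obtain ⟨ε, hε, hball⟩ := Metric.mem_nhds_iff.mp (mem_interior_iff_mem_nhds.mp hy)
  have hkey : ∀ p : E, p ∈ L → dist p Ytil < ε → p ∈ G2 := by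
    intro p hp hd
    have : (⟨p, hp⟩ : L) ∈ Metric.ball y ε := by
      rw [Metric.mem_ball, Subtype.dist_eq, hyc]
      exact hd
    exact hball this
  obtain ⟨κ0, hκ0, hreg⟩ := aux_affreg G1 L hY1 hYL
  set N := G1 ⊓ L with hNdef
  have hNclosed : IsClosed (N : Set E) := N.closed_of_finiteDimensional
  have hNne : (N : Set E).Nonempty := ⟨Ytil, ⟨hY1, hYL⟩⟩
  obtain ⟨M, hM⟩ := hB.subset_closedBall Ytil
  set M' := max M 0 with hM'def
  have hM'0 : 0 ≤ M' := le_max_right _ _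
  set R := 2*κ0*M' + M' with hRdef
  have hR0 : 0 ≤ R := by positivity
  refine ⟨2*κ0 + 2*(2*κ0+1)*R/ε + 1, by positivity, fun Y hY => ?_⟩
  set d := max (Metric.infDist Y (G1 : Set E)) (Metric.infDist Y G2) with hddef
  have hd0 : 0 ≤ d := le_max_of_le_left Metric.infDist_nonneg
  have hYM : dist Y Ytil ≤ M' := le_trans (Metric.mem_closedBall.mp (hM hY)) (le_max_left _ _)
  have hdM : d ≤ M' := by
    have h1 : Metric.infDist Y (G1 : Set E) ≤ dist Y Ytil :=
      Metric.infDist_le_dist_of_mem hY1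
    have h2 : Metric.infDist Y G2 ≤ dist Y Ytil := Metric.infDist_le_dist_of_mem hYG2
    exact max_le (h1.trans hYM) (h2.trans hYM)
  have hdL : Metric.infDist Y (L : Set E) ≤ Metric.infDist Y G2 :=
    Metric.infDist_le_infDist_of_subset (subset_affineSpan ℝ G2) hG2ne
  have hdN : Metric.infDist Y (N : Set E) ≤ 2*κ0*d := by
    calc Metric.infDist Y (N : Set E)
        ≤ κ0 * (Metric.infDist Y (G1 : Set E) + Metric.infDist Y (L : Set E)) := hreg Y
      _ ≤ κ0 * (d + d) := by
          have hA : Metric.infDist Y (G1 : Set E) ≤ d := le_max_left _ _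
          have hB2 : Metric.infDist Y (L : Set E) ≤ d := hdL.trans (le_max_right _ _)
          have := add_le_add hA hB2
          exact mul_le_mul_of_nonneg_left this hκ0.le
      _ = 2*κ0*d := by ring
  obtain ⟨x0, hx0N, hx0d⟩ := hNclosed.exists_infDist_eq_dist hNne Y
  have hx0G1 : x0 ∈ G1 := hx0N.1
  have hx0L : x0 ∈ L := hx0N.2
  have hYx0 : dist Y x0 ≤ 2*κ0*d := hx0d ▸ hdN
  set δ := Metric.infDist x0 G2 with hδdef
  have hδ0 : 0 ≤ δ := Metric.infDist_nonneg
  have hδle : δ ≤ (2*κ0+1)*d := by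
    calc δ ≤ Metric.infDist Y G2 + dist x0 Y := Metric.infDist_le_infDist_add_dist
      _ ≤ d + 2*κ0*d := add_le_add (le_max_right _ _) (by rw [dist_comm]; exact hYx0)
      _ = (2*κ0+1)*d := by ring
  have hx0Y : ‖x0 - Ytil‖ ≤ R := by
    have h1 : dist x0 Ytil ≤ dist x0 Y + dist Y Ytil := dist_triangle _ _ _
    have h2 : dist x0 Y ≤ 2*κ0*M' := by
      rw [dist_comm]
      exact hYx0.trans (by nlinarith)
    rw [← dist_eq_norm]
    calc dist x0 Ytil ≤ dist x0 Y + dist Y Ytil := h1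
      _ ≤ 2*κ0*M' + M' := add_le_add h2 hYM
  obtain ⟨cp, hcpG2, hcpd⟩ := hG2closed.exists_infDist_eq_dist hG2ne x0
  have hz : ∃ z ∈ (G1 : Set E) ∩ G2, dist x0 z ≤ (2*δ/ε) * R := by
    rcases eq_or_lt_of_le hδ0 with h0 | h0
    · have hx0G2 : x0 ∈ G2 :=
        (hG2closed.mem_iff_infDist_zero hG2ne).mpr h0.symm
      exact ⟨x0, ⟨hx0G1, hx0G2⟩, by rw [dist_self]; positivity⟩
    · set lam := δ / (δ + ε/2) with hlamdef
      have hden : 0 < δ + ε/2 := by linarith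
      have hlam0 : 0 < lam := div_pos h0 hden
      have hlam1 : lam ≤ 1 := by
        rw [div_le_one hden]; linarith
      set z := Ytil + (1 - lam) • (x0 - Ytil) with hzdef
      have hzG1 : z ∈ G1 := by
        have hdir : x0 - Ytil ∈ G1.direction := by
          have := AffineSubspace.vsub_mem_direction hx0G1 hY1
          simpa [vsub_eq_sub] using this
        have := AffineSubspace.vadd_mem_of_mem_direction
          (G1.direction.smul_mem (1 - lam) hdir) hY1
        simpa [hzdef, vadd_eq_add, add_comm] using this
      have hxcp : ‖x0 - cp‖ = δ := by rw [← dist_eq_norm, ← hcpd]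
      set y' := Ytil + ((1 - lam)/lam) • (x0 - cp) with hy'def
      have hy'L : y' ∈ L := by
        have hcpL : cp ∈ L := subset_affineSpan ℝ G2 hcpG2
        have hdir : x0 - cp ∈ L.direction := by
          have := AffineSubspace.vsub_mem_direction hx0L hcpL
          simpa [vsub_eq_sub] using this
        have := AffineSubspace.vadd_mem_of_mem_direction
          (L.direction.smul_mem ((1 - lam)/lam) hdir) hYL
        simpa [hy'def, vadd_eq_add, add_comm] using this
      have hlamval : (1 - lam)/lam = (ε/2)/δ := by
        rw [hlamdef]
        field_simp
        ring
      have hy'dist : dist y' Ytil = ε/2 := by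
        rw [hy'def, dist_eq_norm]
        simp only [add_sub_cancel_left]
        rw [norm_smul, hxcp, Real.norm_eq_abs, hlamval,
          abs_of_nonneg (by positivity)]
        field_simp
      have hy'G2 : y' ∈ G2 := hkey y' hy'L (by rw [hy'dist]; linarith)
      have hzG2 : z ∈ G2 := by
        have hcomb := hG2conv hcpG2 hy'G2 (by linarith : (0:ℝ) ≤ 1 - lam) hlam0.le
          (by ring : (1 - lam) + lam = 1)
        have heq : (1 - lam) • cp + lam • y' = z := by
          rw [hy'def, hzdef, smul_add, smul_smul]
          rw [mul_div_cancel₀ _ hlam0.ne']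
          module
        rwa [heq] at hcomb
      refine ⟨z, ⟨hzG1, hzG2⟩, ?_⟩
      have hxz : x0 - z = lam • (x0 - Ytil) := by
        rw [hzdef]; module
      rw [dist_eq_norm, hxz, norm_smul, Real.norm_eq_abs, abs_of_nonneg hlam0.le]
      have hlamle : lam ≤ 2*δ/ε := by
        rw [hlamdef, div_le_div_iff₀ hden (by linarith)]
        nlinarith
      exact mul_le_mul hlamle hx0Y (norm_nonneg _) (by positivity)
  obtain ⟨z, hzmem, hzd⟩ := hz
  calc Metric.infDist Y ((G1 : Set E) ∩ G2) ≤ dist Y z :=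
      Metric.infDist_le_dist_of_mem hzmem
    _ ≤ dist Y x0 + dist x0 z := dist_triangle _ _ _
    _ ≤ 2*κ0*d + (2*δ/ε)*R := add_le_add hYx0 hzd
    _ ≤ 2*κ0*d + (2*((2*κ0+1)*d)/ε)*R := by
        gcongr
    _ = (2*κ0 + 2*(2*κ0+1)*R/ε)*d := by field_simp
    _ ≤ (2*κ0 + 2*(2*κ0+1)*R/ε + 1)*d := by nlinarith
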